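/- (Lossless expansion for RMS Norm.) Let D_S ≥ 1, D_T ≥ D_S, k = ⌊D_T/D_S⌋, r = D_T mod D_S, and η = √(k·D_S/D_T). Let μ ∈ ℝ^{D_S}, ε > 0, and let ζ ∈ ℝ^r be arbitrary. Define μ* ∈ ℝ^{D_T} by μ*[i] = η·μ[i mod D_S] for i < k·D_S and μ*[i] = η·ζ[i − k·D_S] otherwise, and set ε* = η²·ε. Then for every x ∈ ℝ^{D_S}, RMS(V_zero(x); μ*, ε*) = V_zero(RMS(x; μ, ε)). -/

import Mathlib

/-- Index bound for the tail part of an expansion from dimension `DS` to `DT`. -/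
theorem sub_lt_mod (DS DT i : ℕ) (hDS : 0 < DS) (hi : i < DT) (h2 : DT / DS * DS ≤ i) :
    i - DT / DS * DS < DT % DS := by
  have h := Nat.div_add_mod' DT DS
  set m := DT / DS * DS
  omega

/-- Average expansion `V_avg` from `ℝ^{DS}` to `ℝ^{DT}`. -/
noncomputable def vAvg (DS DT : ℕ) (hDS : 0 < DS) (x : Fin DS → ℝ) : Fin DT → ℝ :=
  fun i => if i.val < DT / DS * DS then x ⟨i.val % DS, Nat.mod_lt _ hDS⟩
           else (∑ j, x j) / (DS : ℝ)

/-- Zero expansion `V_zero` from `ℝ^{DS}` to `ℝ^{DT}`. -/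
def vZero (DS DT : ℕ) (hDS : 0 < DS) (x : Fin DS → ℝ) : Fin DT → ℝ :=
  fun i => if i.val < DT / DS * DS then x ⟨i.val % DS, Nat.mod_lt _ hDS⟩ else 0

/-- Circular expansion `V_circ` from `ℝ^{DS}` to `ℝ^{DT}`. -/
def vCirc (DS DT : ℕ) (hDS : 0 < DS) (x : Fin DS → ℝ) : Fin DT → ℝ :=
  fun i => x ⟨i.val % DS, Nat.mod_lt _ hDS⟩

/-- Mean of a vector. -/
noncomputable def meanV {D : ℕ} (x : Fin D → ℝ) : ℝ := (∑ i, x i) / (D : ℝ)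

/-- Population variance of a vector. -/
noncomputable def varV {D : ℕ} (x : Fin D → ℝ) : ℝ := (∑ i, (x i - meanV x) ^ 2) / (D : ℝ)

/-- RMS Norm with scale `μ` and constant `ε`. -/
noncomputable def rmsNorm {D : ℕ} (x μ : Fin D → ℝ) (ε : ℝ) : Fin D → ℝ :=
  fun i => μ i * x i / Real.sqrt ((∑ j, (x j) ^ 2) / (D : ℝ) + ε)

/-- `η = √(⌊D_T/D_S⌋·D_S/D_T)`. -/
noncomputable def eta (DS DT : ℕ) : ℝ :=
  Real.sqrt (((DT / DS * DS : ℕ) : ℝ) / (DT : ℝ))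

/-- The expanded scale `μ*`: `μ*[i] = η·μ[i mod D_S]` for `i < ⌊D_T/D_S⌋·D_S`,
and `μ*[i] = η·ζ[i − ⌊D_T/D_S⌋·D_S]` otherwise. -/
noncomputable def muStar (DS DT : ℕ) (hDS : 0 < DS) (η : ℝ) (μ : Fin DS → ℝ)
    (ζ : Fin (DT % DS) → ℝ) : Fin DT → ℝ :=
  fun i => if h : i.val < DT / DS * DS
    then η * μ ⟨i.val % DS, Nat.mod_lt _ hDS⟩
    else η * ζ ⟨i.val - DT / DS * DS, sub_lt_mod DS DT i.val hDS i.isLt (not_lt.mp h)⟩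


/-- lossless expansion for RMS Norm:
`RMS(V_zero(x); μ*, η²·ε) = V_zero(RMS(x; μ, ε))`. -/
lemma sum_range_mul_mod (DS k : ℕ) (hDS : 0 < DS) (x : Fin DS → ℝ) :
    ∑ i ∈ Finset.range (k * DS), (x ⟨i % DS, Nat.mod_lt _ hDS⟩) ^ 2
      = k * ∑ j : Fin DS, (x j) ^ 2 := by
  induction k with
  | zero => simp
  | succ k ih =>
    rw [Nat.succ_mul, Finset.sum_range_add, ih]
    have h : ∀ j ∈ Finset.range DS,
        (x ⟨(k * DS + j) % DS, Nat.mod_lt _ hDS⟩) ^ 2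
          = (x ⟨j % DS, Nat.mod_lt _ hDS⟩) ^ 2 := by
      intro j hj
      have hm : (k * DS + j) % DS = j % DS := by
        rw [add_comm]; exact Nat.add_mul_mod_self_right j k DS
      congr 1
      exact congrArg x (Fin.ext hm)
    rw [Finset.sum_congr rfl h]
    have h2 : ∑ j ∈ Finset.range DS, (x ⟨j % DS, Nat.mod_lt _ hDS⟩) ^ 2
        = ∑ j : Fin DS, (x j) ^ 2 := by
      have e1 : ∑ i : Fin DS, (x ⟨(i : ℕ) % DS, Nat.mod_lt _ hDS⟩) ^ 2
          = ∑ j ∈ Finset.range DS, (x ⟨j % DS, Nat.mod_lt _ hDS⟩) ^ 2 :=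
        Fin.sum_univ_eq_sum_range (fun n => (x ⟨n % DS, Nat.mod_lt _ hDS⟩) ^ 2) DS
      rw [← e1]
      apply Finset.sum_congr rfl
      intro i _
      congr 1
      exact congrArg x (Fin.ext (Nat.mod_eq_of_lt i.isLt))
    rw [h2]
    push_cast
    ring

theorem stmt_6 (DS DT : ℕ) (hDS : 0 < DS) (hDT : DS ≤ DT)
    (μ : Fin DS → ℝ) (ε : ℝ) (hε : 0 < ε)
    (ζ : Fin (DT % DS) → ℝ) (x : Fin DS → ℝ) :
    rmsNorm (vZero DS DT hDS x) (muStar DS DT hDS (eta DS DT) μ ζ) ((eta DS DT) ^ 2 * ε)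
      = vZero DS DT hDS (rmsNorm x μ ε) := by
  have hDTpos : 0 < DT := lt_of_lt_of_le hDS hDT
  have hkpos : 0 < DT / DS := (Nat.one_le_div_iff hDS).mpr hDT
  have hkDSpos : 0 < DT / DS * DS := Nat.mul_pos hkpos hDS
  have hetapos : 0 < eta DS DT := by
    apply Real.sqrt_pos.mpr
    apply div_pos (by exact_mod_cast hkDSpos) (by exact_mod_cast hDTpos)
  have heta2 : (eta DS DT) ^ 2 = ((DT / DS * DS : ℕ) : ℝ) / (DT : ℝ) := by
    rw [eta, Real.sq_sqrt]
    positivity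
  set F : ℕ → ℝ := fun n => if n < DT / DS * DS
      then (x ⟨n % DS, Nat.mod_lt _ hDS⟩) ^ 2 else 0 with hFdef
  have key : ∑ i : Fin DT, (vZero DS DT hDS x i) ^ 2
      = ((DT / DS : ℕ) : ℝ) * ∑ j, x j ^ 2 := by
    have hF : ∀ i : Fin DT, (vZero DS DT hDS x i) ^ 2 = F i.val := by
      intro i
      simp only [vZero, hFdef]
      split <;> simp
    have e0 : ∑ i : Fin DT, (vZero DS DT hDS x i) ^ 2 = ∑ n ∈ Finset.range DT, F n := by
      rw [Finset.sum_congr rfl (fun i _ => hF i)]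
      exact Fin.sum_univ_eq_sum_range F DT
    have hsplit : DT = DT / DS * DS + DT % DS := (Nat.div_add_mod' DT DS).symm
    have esplit : ∑ n ∈ Finset.range DT, F n
        = (∑ n ∈ Finset.range (DT / DS * DS), F n)
          + ∑ n ∈ Finset.range (DT % DS), F (DT / DS * DS + n) := by
      have h := Finset.sum_range_add F (DT / DS * DS) (DT % DS)
      rw [← hsplit] at h
      exact h
    have h2 : ∑ n ∈ Finset.range (DT % DS), F (DT / DS * DS + n) = 0 := by
      apply Finset.sum_eq_zero
      intro i _
      simp only [hFdef]
      rw [if_neg (by omega)]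
    have h1 : ∑ n ∈ Finset.range (DT / DS * DS), F n
        = ∑ n ∈ Finset.range (DT / DS * DS), (x ⟨n % DS, Nat.mod_lt _ hDS⟩) ^ 2 := by
      apply Finset.sum_congr rfl
      intro i hi
      simp only [hFdef]
      rw [if_pos (Finset.mem_range.mp hi)]
    rw [e0, esplit, h1, h2, add_zero, sum_range_mul_mod DS (DT / DS) hDS x]
  have hA : (∑ j, (x j) ^ 2) / (DS : ℝ) + ε > 0 := by positivity
  have hden : (∑ i : Fin DT, (vZero DS DT hDS x i) ^ 2) / (DT : ℝ) + (eta DS DT) ^ 2 * ε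
      = (eta DS DT) ^ 2 * ((∑ j, (x j) ^ 2) / (DS : ℝ) + ε) := by
    rw [key, heta2]
    have hDS' : (DS : ℝ) ≠ 0 := by positivity
    have hDT' : (DT : ℝ) ≠ 0 := by positivity
    push_cast
    field_simp
  have hsqrt : Real.sqrt ((∑ i : Fin DT, (vZero DS DT hDS x i) ^ 2) / (DT : ℝ)
        + (eta DS DT) ^ 2 * ε)
      = eta DS DT * Real.sqrt ((∑ j, (x j) ^ 2) / (DS : ℝ) + ε) := by
    rw [hden, Real.sqrt_mul (by positivity), Real.sqrt_sq hetapos.le]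
  have hsq : 0 < Real.sqrt ((∑ j, (x j) ^ 2) / (DS : ℝ) + ε) := Real.sqrt_pos.mpr hA
  have hsq' : Real.sqrt ((∑ j, (x j) ^ 2) / (DS : ℝ) + ε) ≠ 0 := ne_of_gt hsq
  have heta' : eta DS DT ≠ 0 := ne_of_gt hetapos
  funext i
  simp only [rmsNorm, hsqrt]
  by_cases h : i.val < DT / DS * DS
  · simp only [vZero, muStar, h, if_pos, dif_pos, rmsNorm]
    rw [mul_assoc]
    exact mul_div_mul_left _ _ heta'
  · simp only [vZero, muStar, h, if_neg, dif_neg, not_false_iff]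
    simp
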